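/- For each k ≥ 0, the number of elements in the conjugacy class of s₁ in W_(3) whose length is at most 2k+1 is at least 2^k. -/

import Mathlib

/-- The Coxeter matrix of the universal Coxeter group `W₍₃₎` on three generators:
all off-diagonal entries are `0`, i.e. `∞`. -/
def M3 : CoxeterMatrix (Fin 3) where
  M := Matrix.of fun i j => if i = j then 1 else 0
  isSymm := by decide
  diagonal := by decide
  off_diagonal := by
    intro i i' h
    simp [Matrix.of_apply, h]

/-- The universal Coxeter group `W₍₃₎ = ℤ/2 * ℤ/2 * ℤ/2`. -/
abbrev W3 : Type := M3.Group

/-- The canonical Coxeter system on `W₍₃₎`. -/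
def cs3 : CoxeterSystem M3 W3 := M3.toCoxeterSystem



/-- Reduced-ish lists: no two adjacent letters equal. -/
abbrev R3 := {L : List (Fin 3) // L.Chain' (· ≠ ·)}

/-- Action of the generator `i` on reduced lists: cancel-or-prepend. -/
def f3 (i : Fin 3) : R3 → R3
  | ⟨[], _⟩ => ⟨[i], List.isChain_singleton i⟩
  | ⟨a :: t, h⟩ =>
      if hai : a = i then ⟨t, h.tail⟩
      else ⟨i :: a :: t, h.cons (by simpa using fun e => hai e.symm)⟩

lemma f3_cancel (i : Fin 3) (t : List (Fin 3)) (h : (i :: t).Chain' (· ≠ ·)) :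
    f3 i ⟨i :: t, h⟩ = ⟨t, h.tail⟩ := dif_pos rfl

lemma f3_prepend (i a : Fin 3) (t : List (Fin 3)) (h : (a :: t).Chain' (· ≠ ·))
    (hai : a ≠ i) (h' : (i :: a :: t).Chain' (· ≠ ·)) :
    f3 i ⟨a :: t, h⟩ = ⟨i :: a :: t, h'⟩ := by
  show (if hai : a = i then (⟨t, h.tail⟩ : R3) else ⟨i :: a :: t, _⟩) = _
  rw [dif_neg hai]

lemma f3_invol (i : Fin 3) : Function.Involutive (f3 i) := by
  rintro ⟨L, hL⟩
  match L, hL with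
  | [], _ => simp [f3]
  | a :: t, h =>
    by_cases hai : a = i
    · subst hai
      rw [f3_cancel]
      match t, h with
      | [], _ => simp [f3]
      | b :: t', h' =>
        have hab : a ≠ b := (List.isChain_cons_cons.1 h').1
        exact f3_prepend a b t' h'.tail (fun e => hab e.symm) h'
    · rw [f3_prepend i a t h hai (h.cons (by simpa using fun e => hai e.symm))]
      exact f3_cancel _ _ _

def perm3 (i : Fin 3) : Equiv.Perm R3 := (f3_invol i).toPerm

lemma liftable3 : M3.IsLiftable perm3 := by
  intro i j
  by_cases hij : i = j
  · subst hij
    have : perm3 i * perm3 i = 1 := Equiv.ext fun x => f3_invol i x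
    simp [M3, this]
  · simp [M3, Matrix.of_apply, hij]

def φ3 : W3 →* Equiv.Perm R3 := cs3.lift ⟨perm3, liftable3⟩

lemma φ3_simple (i : Fin 3) : φ3 (cs3.simple i) = perm3 i :=
  cs3.lift_apply_simple liftable3 i

lemma act_eq (L : List (Fin 3)) (hL : L.Chain' (· ≠ ·)) :
    φ3 (cs3.wordProd L) ⟨[], List.isChain_nil⟩ = ⟨L, hL⟩ := by
  induction L with
  | nil => simp [CoxeterSystem.wordProd_nil]
  | cons i t ih =>
    rw [CoxeterSystem.wordProd_cons, map_mul, φ3_simple]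
    have ht := hL.tail
    simp only [Equiv.Perm.mul_apply, ih ht]
    show f3 i ⟨t, ht⟩ = ⟨i :: t, hL⟩
    match t, ht, hL with
    | [], _, _ => simp [f3]
    | a :: t', ht', hL' =>
      have hia : i ≠ a := (List.isChain_cons_cons.1 hL').1
      exact f3_prepend i a t' ht' (fun e => hia e.symm) hL'

def pick (n : Fin 3) (b : Bool) : Fin 3 := if b then n + 1 else n + 2

lemma pick_ne (n : Fin 3) (b : Bool) : pick n b ≠ n := by revert n b; decide

lemma pick_inj (n : Fin 3) {b b' : Bool} (h : pick n b = pick n b') : b = b' := by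
  revert n b b' h; decide

def enc : List Bool → List (Fin 3)
  | [] => []
  | b :: r => pick (enc r).headI b :: enc r

lemma enc_length (r : List Bool) : (enc r).length = r.length := by
  induction r with
  | nil => rfl
  | cons b t ih => simp [enc, ih]

lemma enc_chain (r : List Bool) : (enc r ++ [0]).Chain' (· ≠ ·) := by
  induction r with
  | nil => exact List.isChain_singleton 0
  | cons b t ih =>
    simp only [enc, List.cons_append]
    refine List.isChain_cons.2 ⟨?_, ih⟩
    intro y hy
    have hh : (enc t ++ [0]).head? = some ((enc t).headI) := by
      cases h : enc t with
      | nil => simp [h]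
      | cons c l => simp [h]
    rw [hh, Option.mem_def, Option.some_inj] at hy
    rw [← hy]
    exact pick_ne _ b

/-- The full palindromic word. -/
def fw (r : List Bool) : List (Fin 3) := enc r ++ (enc r ++ [0]).reverse

lemma fw_chain (r : List Bool) : (fw r).Chain' (· ≠ ·) := by
  rw [fw, List.Chain', List.isChain_append]
  obtain ⟨h1, h2, h3⟩ := List.isChain_append.1 (enc_chain r)
  refine ⟨h1, ?_, ?_⟩
  · exact List.isChain_reverse.2 ((enc_chain r).imp fun a b h => h.symm)
  · intro x hx y hy
    rw [List.head?_reverse, List.getLast?_concat, Option.mem_def, Option.some_inj] at hy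
    rw [← hy]
    exact h3 x hx 0 (by simp)

lemma fw_inj {r r' : List Bool} (hlen : r.length = r'.length)
    (h : cs3.wordProd (fw r) = cs3.wordProd (fw r')) : r = r' := by
  have := congrArg (fun w => φ3 w ⟨[], List.isChain_nil⟩) h
  rw [act_eq _ (fw_chain r), act_eq _ (fw_chain r')] at this
  have hfw : fw r = fw r' := congrArg Subtype.val this
  rw [fw, fw] at hfw
  have henc : enc r = enc r' :=
    (List.append_inj hfw (by rw [enc_length, enc_length, hlen])).1
  clear * - hlen henc
  induction r generalizing r' with
  | nil => cases r' with
    | nil => rfl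
    | cons b t => simp at hlen
  | cons b t ih =>
    cases r' with
    | nil => simp at hlen
    | cons b' t' =>
      simp only [enc, List.cons.injEq] at henc
      obtain ⟨hhead, htail⟩ := henc
      have ht : t = t' := ih (by simpa using hlen) htail
      subst ht
      rw [pick_inj _ hhead]

/-- For each `k ≥ 0`, the conjugacy class of `s₁` in the universal Coxeter group
`W₍₃₎` contains at least `2^k` elements of length at most `2k+1`. -/
theorem conjugates_of_s1_of_bounded_length (k : ℕ) :
    2 ^ k ≤ Set.ncard {t : W3 |
      (∃ w : W3, w * cs3.simple 0 * w⁻¹ = t) ∧ cs3.length t ≤ 2 * k + 1} := by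
  classical
  set T := {t : W3 |
      (∃ w : W3, w * cs3.simple 0 * w⁻¹ = t) ∧ cs3.length t ≤ 2 * k + 1} with hT
  have hfin : T.Finite := by
    refine ((List.finite_length_le (Fin 3) (2 * k + 1)).image cs3.wordProd).subset ?_
    rintro t ⟨-, hlen⟩
    obtain ⟨ω, hω, hπ⟩ := cs3.exists_reduced_word t
    exact ⟨ω, by simp only [Set.mem_setOf_eq]; have := hω.eq; rw [hπ] at hlen; omega, hπ.symm⟩
  set ψ : (Fin k → Bool) → W3 := fun v => cs3.wordProd (fw (List.ofFn v)) with hψ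
  have hinj : Function.Injective ψ := by
    intro v v' h
    have := fw_inj (by simp) h
    exact List.ofFn_injective this
  have hsub : Set.range ψ ⊆ T := by
    rintro t ⟨v, rfl⟩
    constructor
    · refine ⟨cs3.wordProd (enc (List.ofFn v)), ?_⟩
      rw [hψ]
      simp only [fw, CoxeterSystem.wordProd_append, CoxeterSystem.wordProd_reverse,
        CoxeterSystem.wordProd_singleton, mul_inv_rev]
      rw [CoxeterSystem.inv_simple, mul_assoc]
    · calc cs3.length (ψ v) ≤ (fw (List.ofFn v)).length := cs3.length_wordProd_le _
        _ ≤ 2 * k + 1 := by simp [fw, enc_length]; omega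
  calc 2 ^ k = Set.ncard (Set.range ψ) := by
        rw [← Nat.card_coe_set_eq, Nat.card_range_of_injective hinj]
        simp
    _ ≤ T.ncard := Set.ncard_le_ncard hsub hfin
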